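/- Let R = 𝔽_{q^{dℓ}}[t̃_v] be a polynomial ring and S = ∏_{i=1}^{d-1}(1 − (ε^{q^i} − ε) t̃_v) ∈ R, where ε generates 𝔽_{q^d} over 𝔽_q. Set T̃_v := t̃_v^d / S in the fraction field. Then R[1/S] = 𝔽_{q^{dℓ}}[T̃_v][t̃_v], this ring is a principal ideal domain, and it equals the integral closure of 𝔽_q[T̃_v] in 𝔽_{q^{dℓ}}(t̃_v). Moreover, the prime (T̃_v) of 𝔽_q[T̃_v] is totally ramified in this ring, with the unique prime above it being the principal ideal (t̃_v). -/

import Mathlib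

open Polynomial


lemma aux_intE {F E : Type*} [Field F] [Field E] [Fintype E] [Algebra F E]
    (T : RatFunc E) (e : E) :
    (Polynomial.eval₂RingHom (((algebraMap E (RatFunc E)).comp (algebraMap F E))) T).IsIntegralElem
      (algebraMap E (RatFunc E) e) := by
  refine ⟨X ^ Fintype.card E - X, ?_, ?_⟩
  · refine Polynomial.monic_X_pow_sub ?_
    refine lt_of_le_of_lt Polynomial.degree_X_le ?_
    exact_mod_cast Fintype.one_lt_card
  · simp only [eval₂_sub, eval₂_pow, eval₂_X]
    rw [← map_pow, FiniteField.pow_card, sub_self]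

lemma aux_intT {F E : Type*} [Field F] [Field E] [Algebra F E] (T : RatFunc E) :
    (Polynomial.eval₂RingHom (((algebraMap E (RatFunc E)).comp (algebraMap F E))) T).IsIntegralElem
      T := by
  refine ⟨X - C X, Polynomial.monic_X_sub_C _, ?_⟩
  simp

-- aux: divisibility identity
lemma aux_dvd {E : Type*} [Field E] (S : E[X]) (hS0 : S.coeff 0 = 1) (d : ℕ) :
    S ∣ 1 - (-(X * S.divX)) ^ d := by
  have h1 : S - X * S.divX = 1 := by
    nth_rewrite 1 [← Polynomial.X_mul_divX_add S]
    rw [hS0, map_one]; ring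
  have h2 := sub_dvd_pow_sub_pow (S - X * S.divX) (-(X * S.divX)) d
  rw [sub_neg_eq_add, sub_add_cancel, h1, one_pow] at h2
  exact h2

-- aux: membership of polynomial images in adjoin of t
lemma aux_mem {E : Type*} [Field E] (p : E[X]) :
    algebraMap E[X] (RatFunc E) p ∈ Algebra.adjoin E {algebraMap E[X] (RatFunc E) X} := by
  have : algebraMap E[X] (RatFunc E) p = aeval (algebraMap E[X] (RatFunc E) X) p := by
    rw [Polynomial.aeval_algebraMap_apply, Polynomial.aeval_X_left_apply]
  rw [this]
  exact Polynomial.aeval_mem_adjoin_singleton E _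


set_option maxHeartbeats 1000000 in
set_option synthInstance.maxHeartbeats 1000000 in
/-- Let `R = 𝔽_{q^{dℓ}}[t̃]` and `S = ∏_{i=1}^{d-1}(1 − (ε^{q^i} − ε) t̃) ∈ R`, where `ε`
generates `𝔽_{q^d}` over `𝔽_q`, and set `T̃ := t̃^d / S` in the fraction field
`𝔽_{q^{dℓ}}(t̃)`.  Then `R[1/S] = 𝔽_{q^{dℓ}}[T̃][t̃]`, this ring is a principal ideal
domain, and it equals the integral closure of `𝔽_q[T̃]` in `𝔽_{q^{dℓ}}(t̃)`.  Moreover,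
the prime `(T̃)` of `𝔽_q[T̃]` is totally ramified in this ring: the ideal `(t̃)` is the
unique prime above `(T̃)`, and `(T̃) = (t̃)^d`. -/
theorem restriction_of_scalars_ring (F E : Type*) [Field F] [Fintype F] [Field E]
    [Fintype E] [Algebra F E]
    (q d ℓ : ℕ) (hq : q = Fintype.card F) (hd : 0 < d) (hℓ : 0 < ℓ)
    (hE : Fintype.card E = q ^ (d * ℓ))
    (ε : E) (hεd : ε ^ q ^ d = ε)
    (hdist : ∀ i j, i < d → j < d → ε ^ q ^ i = ε ^ q ^ j → i = j)
    (S : E[X]) (hS : S = ∏ i ∈ Finset.Ioo 0 d, (1 - C (ε ^ q ^ i - ε) * X))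
    (t s T : RatFunc E)
    (ht : t = algebraMap E[X] (RatFunc E) X)
    (hs : s = algebraMap E[X] (RatFunc E) S)
    (hT : T = t ^ d / s)
    (ψ : Polynomial F →+* RatFunc E)
    (hψ : ψ = Polynomial.eval₂RingHom
      (((algebraMap E (RatFunc E)).comp (algebraMap F E)) : F →+* RatFunc E) T)
    (A : Subalgebra E (RatFunc E)) (hA : A = Algebra.adjoin E {t, T}) :
    A = Algebra.adjoin E {t, s⁻¹} ∧
    IsPrincipalIdealRing A ∧
    (∀ x : RatFunc E, x ∈ A ↔ ψ.IsIntegralElem x) ∧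
    (∀ tA TA : A, (tA : RatFunc E) = t → (TA : RatFunc E) = T →
      ((Ideal.span {tA}).IsPrime ∧
        (∀ Q : Ideal A, Q.IsPrime → TA ∈ Q → Q = Ideal.span {tA}) ∧
        Ideal.span {TA} = Ideal.span {tA} ^ d)) := by
  set ρ : E[X] →+* RatFunc E := algebraMap E[X] (RatFunc E) with hρ
  have hρinj : Function.Injective ρ := IsFractionRing.injective E[X] (RatFunc E)
  have hS0 : S.coeff 0 = 1 := by
    simp [hS, Polynomial.coeff_zero_eq_eval_zero, Polynomial.eval_prod]
  have hSne : S ≠ 0 := fun h => by simp [h] at hS0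
  have hs0 : s ≠ 0 := by
    rw [hs]; exact fun h => hSne (hρinj (by simpa using h))
  have htds : t ^ d = T * s := by rw [hT, div_mul_cancel₀ _ hs0]
  have hdeg : S.natDegree < d := by
    rw [hS]
    refine lt_of_le_of_lt (le_trans (Polynomial.natDegree_prod_le _ _) ?_)
      (show d - 1 < d by omega)
    refine le_trans (Finset.sum_le_card_nsmul _ _ 1 ?_) (by simp [Nat.card_Ioo])
    intro i _
    refine le_trans (Polynomial.natDegree_sub_le _ _) ?_
    simp only [natDegree_one, max_le_iff, Nat.zero_le, true_and]
    exact le_trans (Polynomial.natDegree_C_mul_le _ _) (by simp)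
  -- polynomial image facts
  have hmem1 : ∀ p : E[X], ρ p ∈ Algebra.adjoin E {t} := by
    intro p
    have h1 : ρ p = aeval t p := by
      rw [ht, Polynomial.aeval_algebraMap_apply, Polynomial.aeval_X_left_apply]
    rw [h1]
    exact Polynomial.aeval_mem_adjoin_singleton E _
  have hsubA : Algebra.adjoin E {t} ≤ A := by
    rw [hA]; exact Algebra.adjoin_mono (by simp)
  have hmemA : ∀ p : E[X], ρ p ∈ A := fun p => hsubA (hmem1 p)
  have htA : t ∈ A := by rw [hA]; exact Algebra.subset_adjoin (by simp)
  have hTA : T ∈ A := by rw [hA]; exact Algebra.subset_adjoin (by simp)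
  have hsA : s ∈ A := hs ▸ hmemA S
  -- the inverse identity
  obtain ⟨U, hU⟩ := aux_dvd S hS0 d
  have hkey : (1 : RatFunc E) - (-(t * ρ S.divX)) ^ d = s * ρ U := by
    have h3 := congrArg ρ hU
    simp only [map_sub, map_one, map_pow, map_neg, map_mul, ← ht, ← hs] at h3
    exact h3
  have hsinv : s⁻¹ = ρ U + (-ρ S.divX) ^ d * T := by
    refine inv_eq_of_mul_eq_one_right ?_
    have h4 : s * ((-ρ S.divX) ^ d * T) = (-(t * ρ S.divX)) ^ d := by
      rw [hT, neg_mul_eq_mul_neg, mul_pow]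
      field_simp
    rw [mul_add, h4, ← hkey]; ring
  have hsinvA : s⁻¹ ∈ A := by
    rw [hsinv]
    exact add_mem (hmemA U) (mul_mem (pow_mem (neg_mem (hmemA S.divX)) d) hTA)
  -- part 1
  have hpart1 : A = Algebra.adjoin E {t, s⁻¹} := by
    apply le_antisymm
    · rw [hA]
      apply Algebra.adjoin_le
      rintro x (rfl | rfl)
      · exact Algebra.subset_adjoin (by simp)
      · rw [hT, div_eq_mul_inv]
        exact mul_mem (pow_mem (Algebra.subset_adjoin (by simp)) d)
          (Algebra.subset_adjoin (by simp))
    · apply Algebra.adjoin_le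
      rintro x (rfl | rfl)
      · exact htA
      · exact hsinvA

  -- localization setup
  let g : E[X] →+* ↥A := ρ.codRestrict A hmemA
  letI : Algebra E[X] ↥A := g.toAlgebra
  have halg : algebraMap E[X] ↥A = g := rfl
  have hkey2 : ∀ z : RatFunc E, z ∈ Algebra.adjoin E {t, s⁻¹} →
      ∃ p n, z * s ^ n = ρ p := by
    intro z hz
    induction hz using Algebra.adjoin_induction with
    | mem x hx =>
      simp only [Set.mem_insert_iff, Set.mem_singleton_iff] at hx
      rcases hx with rfl | rfl
      · exact ⟨X, 0, by rw [pow_zero, mul_one, ht]⟩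
      · exact ⟨1, 1, by rw [pow_one, inv_mul_cancel₀ hs0, map_one]⟩
    | algebraMap r =>
      refine ⟨C r, 0, ?_⟩
      rw [pow_zero, mul_one, hρ, ← Polynomial.algebraMap_eq,
        ← IsScalarTower.algebraMap_apply]
    | add x y hx hy ihx ihy =>
      obtain ⟨p1, n1, h1⟩ := ihx; obtain ⟨p2, n2, h2⟩ := ihy
      refine ⟨p1 * S ^ n2 + p2 * S ^ n1, n1 + n2, ?_⟩
      rw [map_add, map_mul, map_mul, map_pow, map_pow, ← hs, ← h1, ← h2, pow_add]
      ring
    | mul x y hx hy ihx ihy =>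
      obtain ⟨p1, n1, h1⟩ := ihx; obtain ⟨p2, n2, h2⟩ := ihy
      exact ⟨p1 * p2, n1 + n2, by rw [map_mul, ← h1, ← h2, pow_add]; ring⟩
  haveI hloc : IsLocalization (Submonoid.powers S) ↥A := by
    refine ⟨?_, ?_, ?_⟩
    · rintro ⟨y, n, rfl⟩
      refine isUnit_iff_exists_inv.mpr ⟨⟨(s⁻¹) ^ n, pow_mem hsinvA n⟩, ?_⟩
      apply Subtype.ext
      show ρ (S ^ n) * (s⁻¹) ^ n = 1
      rw [map_pow, ← hs, ← mul_pow, mul_inv_cancel₀ hs0, one_pow]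
    · intro z
      obtain ⟨p, n, hpn⟩ := hkey2 z.1 (hpart1 ▸ z.2)
      refine ⟨⟨p, ⟨S ^ n, n, rfl⟩⟩, ?_⟩
      apply Subtype.ext
      show (z : RatFunc E) * ρ (S ^ n) = ρ p
      rw [map_pow, ← hs]; exact hpn
    · intro x y h
      refine ⟨1, ?_⟩
      have h2 : ρ x = ρ y := congrArg Subtype.val h
      rw [hρinj h2]
  haveI hpid : IsPrincipalIdealRing ↥A := by
    refine ⟨fun I => ?_⟩
    have hp : Submodule.IsPrincipal (I.comap (algebraMap E[X] ↥A)) :=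
      IsPrincipalIdealRing.principal _
    obtain ⟨j, hj⟩ := hp
    refine ⟨⟨algebraMap E[X] ↥A j, ?_⟩⟩
    conv_lhs => rw [← IsLocalization.map_comap (Submonoid.powers S) ↥A I]
    rw [show Ideal.under E[X] I = I.comap (algebraMap E[X] ↥A) from rfl,
      hj, Ideal.submodule_span_eq, Ideal.map_span, Set.image_singleton,
      Ideal.submodule_span_eq]
  haveI hfrac : IsFractionRing ↥A (RatFunc E) := by
    refine ⟨?_, ?_, ?_⟩
    · rintro ⟨y, hy⟩
      refine isUnit_iff_ne_zero.mpr ?_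
      show (y : RatFunc E) ≠ 0
      exact fun h0 => nonZeroDivisors.ne_zero hy (Subtype.ext h0)
    · intro z
      refine ⟨⟨⟨ρ z.num, hmemA _⟩, ⟨⟨ρ z.denom, hmemA _⟩, ?_⟩⟩, ?_⟩
      · refine mem_nonZeroDivisors_of_ne_zero ?_
        intro h0
        apply RatFunc.denom_ne_zero z
        have h1 : ρ z.denom = 0 := congrArg Subtype.val h0
        exact hρinj (by simpa using h1)
      · show z * algebraMap E[X] (RatFunc E) z.denom = algebraMap E[X] (RatFunc E) z.num
        exact ((div_eq_iff (RatFunc.algebraMap_ne_zero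
          (RatFunc.denom_ne_zero z))).mp (RatFunc.num_div_denom z)).symm
    · intro x y h
      exact ⟨1, by rw [Subtype.ext (h : (x : RatFunc E) = y)]⟩

  haveI hiic : IsIntegrallyClosed ↥A := inferInstance
  -- part 3
  have haev : ∀ p : E[X], aeval t p = ρ p := by
    intro p
    rw [ht, Polynomial.aeval_algebraMap_apply, Polynomial.aeval_X_left_apply]
  have hψX : ψ X = T := by rw [hψ]; simp
  have hψmemA : ∀ r : Polynomial F, ψ r ∈ A := by
    intro r
    rw [hψ]
    show Polynomial.eval₂ _ T r ∈ A
    rw [← Polynomial.eval₂_map, ← Polynomial.aeval_def]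
    refine (show Algebra.adjoin E {T} ≤ A by
      rw [hA]; exact Algebra.adjoin_mono (by simp)) ?_
    exact Polynomial.aeval_mem_adjoin_singleton E _
  letI : Algebra (Polynomial F) (RatFunc E) := ψ.toAlgebra
  have halgψ : algebraMap (Polynomial F) (RatFunc E) = ψ := rfl
  have hEint : ∀ e : E, ψ.IsIntegralElem (algebraMap E (RatFunc E) e) := by
    intro e; rw [hψ]; exact aux_intE T e
  have hTint : ψ.IsIntegralElem T := by rw [hψ]; exact aux_intT T
  set B : Subalgebra (Polynomial F) (RatFunc E) :=
    Algebra.adjoin (Polynomial F) (Set.range (algebraMap E (RatFunc E))) with hB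
  haveI hBfin : Module.Finite (Polynomial F) ↥B :=
    ⟨(Subalgebra.toSubmodule B).fg_top.mpr
      (fg_adjoin_of_finite (Set.finite_range _) (by
        rintro x ⟨e, rfl⟩
        exact hEint e))⟩
  haveI : Algebra.IsIntegral (Polynomial F) ↥B := inferInstance
  have hTB : T ∈ B := by
    have h7 : algebraMap (Polynomial F) (RatFunc E) X ∈ B := B.algebraMap_mem X
    rwa [halgψ, hψX] at h7
  have hvalB : ∀ b : ↥B, algebraMap ↥B (RatFunc E) b = (b : RatFunc E) := fun b => rfl
  have hsum : ∑ i ∈ Finset.range d, algebraMap E (RatFunc E) (S.coeff i) * t ^ i = s := by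
    have h8 := Polynomial.aeval_eq_sum_range' hdeg t
    rw [haev S, ← hs] at h8
    rw [h8]
    exact Finset.sum_congr rfl fun i _ => (Algebra.smul_def _ _).symm
  have htB : IsIntegral ↥B t := by
    refine ⟨Polynomial.X ^ d - ∑ i ∈ Finset.range d,
      Polynomial.C (⟨T * algebraMap E (RatFunc E) (S.coeff i),
        mul_mem hTB (Algebra.subset_adjoin (Set.mem_range_self _))⟩ : ↥B) * Polynomial.X ^ i,
      ?_, ?_⟩
    · refine Polynomial.monic_X_pow_sub ?_
      refine lt_of_le_of_lt (Polynomial.degree_sum_le _ _) ?_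
      refine (Finset.sup_lt_iff ?_).mpr ?_
      · exact WithBot.bot_lt_coe d
      · intro i hi
        refine lt_of_le_of_lt (Polynomial.degree_C_mul_X_pow_le _ _) ?_
        exact_mod_cast Finset.mem_range.mp hi
    · simp only [Polynomial.eval₂_sub, Polynomial.eval₂_pow, Polynomial.eval₂_X,
        Polynomial.eval₂_finset_sum, Polynomial.eval₂_mul, Polynomial.eval₂_C, hvalB]
      have h9 : ∑ i ∈ Finset.range d,
          T * algebraMap E (RatFunc E) (S.coeff i) * t ^ i = T * s := by
        rw [← hsum, Finset.mul_sum]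
        exact Finset.sum_congr rfl fun i _ => by ring
      rw [h9]
      exact sub_eq_zero_of_eq htds
  have htψ : ψ.IsIntegralElem t := isIntegral_trans (A := ↥B) t htB
  have hfwd : ∀ x ∈ A, ψ.IsIntegralElem x := by
    intro x hx
    rw [hA] at hx
    induction hx using Algebra.adjoin_induction with
    | mem y hy =>
      simp only [Set.mem_insert_iff, Set.mem_singleton_iff] at hy
      rcases hy with rfl | rfl
      · exact htψ
      · exact hTint
    | algebraMap e => exact hEint e
    | add x y hx hy ihx ihy => exact RingHom.IsIntegralElem.add ψ ihx ihy
    | mul x y hx hy ihx ihy => exact ihx.mul ψ ihy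
  have hbwd : ∀ x : RatFunc E, ψ.IsIntegralElem x → x ∈ A := by
    intro x hx
    obtain ⟨p, pmonic, hp⟩ := hx
    let g2 : Polynomial F →+* ↥A := ψ.codRestrict A hψmemA
    have hAx : IsIntegral ↥A x := by
      refine ⟨p.map g2, pmonic.map g2, ?_⟩
      rw [Polynomial.eval₂_map]
      have hcomp : (algebraMap ↥A (RatFunc E)).comp g2 = ψ := rfl
      rw [hcomp]
      exact hp
    obtain ⟨y, hy⟩ := IsIntegrallyClosed.isIntegral_iff.mp hAx
    rw [← hy]
    exact y.2

  -- part 4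
  have ht0 : t ≠ 0 := by rw [ht]; exact RatFunc.algebraMap_ne_zero Polynomial.X_ne_zero
  have hpart4 : ∀ tA TA : ↥A, (tA : RatFunc E) = t → (TA : RatFunc E) = T →
      ((Ideal.span {tA}).IsPrime ∧
        (∀ Q : Ideal ↥A, Q.IsPrime → TA ∈ Q → Q = Ideal.span {tA}) ∧
        Ideal.span {TA} = Ideal.span {tA} ^ d) := by
    intro tA TA htA' hTA'
    have htAne : tA ≠ 0 := fun h0 => ht0 (by rw [← htA', h0]; rfl)
    have hgX : algebraMap E[X] ↥A X = tA :=
      Subtype.ext (show ρ X = (tA : RatFunc E) by rw [htA', ← ht])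
    have hprime : (Ideal.span {tA}).IsPrime := by
      have hXp : (Ideal.span {(X : E[X])}).IsPrime :=
        (Ideal.span_singleton_prime Polynomial.X_ne_zero).mpr Polynomial.prime_X
      have hdisj : Disjoint ((Submonoid.powers S : Submonoid E[X]) : Set E[X])
          ((Ideal.span {(X : E[X])} : Ideal E[X]) : Set E[X]) := by
        rw [Set.disjoint_left]
        rintro a ⟨n, rfl⟩ ha
        have hdvd := Ideal.mem_span_singleton.mp ha
        have h0 := Polynomial.X_dvd_iff.mp hdvd
        rw [Polynomial.coeff_zero_eq_eval_zero, Polynomial.eval_pow,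
          ← Polynomial.coeff_zero_eq_eval_zero, hS0, one_pow] at h0
        exact one_ne_zero h0
      have hmap := IsLocalization.isPrime_of_isPrime_disjoint (Submonoid.powers S) ↥A
        (Ideal.span {X}) hXp hdisj
      rwa [Ideal.map_span, Set.image_singleton, hgX] at hmap
    have hsAunit : IsUnit (⟨s, hsA⟩ : ↥A) := isUnit_iff_exists_inv.mpr ⟨⟨s⁻¹, hsinvA⟩,
      Subtype.ext (show s * s⁻¹ = 1 from mul_inv_cancel₀ hs0)⟩
    have hfact : tA ^ d = TA * ⟨s, hsA⟩ := by
      apply Subtype.ext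
      show (tA : RatFunc E) ^ d = (TA : RatFunc E) * s
      rw [htA', hTA']; exact htds
    refine ⟨hprime, ?_, ?_⟩
    · intro Q hQ hTQ
      have h1 : tA ^ d ∈ Q := by rw [hfact]; exact Ideal.mul_mem_right _ _ hTQ
      have h2 : tA ∈ Q := hQ.mem_of_pow_mem d h1
      haveI := hprime
      have hmax : (Ideal.span {tA}).IsMaximal :=
        IsPrime.to_maximal_ideal (by
          rw [Ne, Ideal.span_singleton_eq_bot]; exact htAne)
      exact ((hmax.eq_of_le hQ.ne_top) (Ideal.span_le.mpr
        (Set.singleton_subset_iff.mpr h2))).symm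
    · rw [Ideal.span_singleton_pow]
      apply Ideal.span_singleton_eq_span_singleton.mpr
      exact ⟨hsAunit.unit, by rw [IsUnit.unit_spec]; exact hfact.symm⟩
  exact ⟨hpart1, hpid, fun x => ⟨hfwd x, hbwd x⟩, hpart4⟩
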